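/- Let p ≥ 2 be a real number. For all real numbers x and y, |Φ_p(x) + Φ_p(y)| ≥ 2^{2−p} |x + y|^{p−1}. -/
import Mathlib


/-- The p-Laplacian type function `Φ_p(w) = |w|^(p-2) * w` (real exponent `p`). -/
noncomputable def Phi (p w : ℝ) : ℝ := |w| ^ (p - 2) * w

lemma auxA {q x y : ℝ} (hq : 1 ≤ q) (hx : 0 ≤ x) (hy : 0 ≤ y) :
    (x + y) ^ q ≤ 2 ^ (q - 1) * (x ^ q + y ^ q) := by
  have h := NNReal.rpow_add_le_mul_rpow_add_rpow ⟨x, hx⟩ ⟨y, hy⟩ hq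
  have := NNReal.coe_le_coe.2 h
  push_cast at this
  exact this

lemma auxB {q x y : ℝ} (hq : 1 ≤ q) (hx : 0 ≤ x) (hy : 0 ≤ y) :
    x ^ q + y ^ q ≤ (x + y) ^ q := by
  have h := NNReal.add_rpow_le_rpow_add ⟨x, hx⟩ ⟨y, hy⟩ hq
  have := NNReal.coe_le_coe.2 h
  push_cast at this
  exact this

lemma phi_nonneg_eq {p w : ℝ} (hp : 2 ≤ p) (hw : 0 ≤ w) : Phi p w = w ^ (p - 1) := by
  unfold Phi
  rcases eq_or_lt_of_le hw with h | h
  · subst h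
    simp [Real.zero_rpow (by linarith : p - 1 ≠ 0)]
  · rw [abs_of_pos h]
    nth_rewrite 2 [← Real.rpow_one w]
    rw [← Real.rpow_add h, show p - 2 + 1 = p - 1 by ring]

lemma phi_neg (p w : ℝ) : Phi p (-w) = - Phi p w := by
  unfold Phi; rw [abs_neg]; ring

lemma key (p : ℝ) (hp : 2 ≤ p) (x y : ℝ) (hxy : 0 ≤ x + y) :
    (2 : ℝ) ^ (2 - p) * (x + y) ^ (p - 1) ≤ |Phi p x + Phi p y| := by
  have hq : (1 : ℝ) ≤ p - 1 := by linarith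
  have h2 : (0:ℝ) < 2 ^ (p - 2) := Real.rpow_pos_of_pos two_pos _
  have hpow : (2:ℝ) ^ (2 - p) = ((2:ℝ) ^ (p - 2))⁻¹ := by
    rw [← Real.rpow_neg (by norm_num)]; ring_nf
  -- helper for the mixed-sign case
  have mixed : ∀ a b : ℝ, 0 ≤ a → b ≤ 0 → 0 ≤ a + b →
      (2 : ℝ) ^ (2 - p) * (a + b) ^ (p - 1) ≤ |Phi p a + Phi p b| := by
    intro a b ha hb hab
    have hb' : 0 ≤ -b := by linarith
    have e1 : Phi p a = a ^ (p - 1) := phi_nonneg_eq hp ha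
    have e2 : Phi p b = -((-b) ^ (p - 1)) := by
      have h := phi_neg p (-b)
      rw [neg_neg] at h
      rw [h, phi_nonneg_eq hp hb']
    have h3 : (a + b) ^ (p - 1) + (-b) ^ (p - 1) ≤ a ^ (p - 1) := by
      have := auxB hq hab hb'
      simpa using this
    have h4 : (a + b) ^ (p - 1) ≤ a ^ (p - 1) - (-b) ^ (p - 1) := by linarith
    have h5 : (0:ℝ) ≤ a ^ (p - 1) - (-b) ^ (p - 1) := by
      have := Real.rpow_nonneg hab (p - 1); linarith
    rw [e1, e2, show a ^ (p-1) + -((-b)^(p-1)) = a ^ (p-1) - (-b)^(p-1) by ring,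
      abs_of_nonneg h5]
    calc (2 : ℝ) ^ (2 - p) * (a + b) ^ (p - 1)
        ≤ 1 * (a + b) ^ (p - 1) := by
          apply mul_le_mul_of_nonneg_right _ (Real.rpow_nonneg hab _)
          rw [show (1:ℝ) = (2:ℝ) ^ (0:ℝ) by norm_num]
          exact Real.rpow_le_rpow_of_exponent_le (by norm_num) (by linarith)
      _ = (a + b) ^ (p - 1) := one_mul _
      _ ≤ a ^ (p - 1) - (-b) ^ (p - 1) := h4
  rcases le_or_gt 0 x with hx | hx
  · rcases le_or_gt 0 y with hy | hy
    · -- both nonneg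
      rw [phi_nonneg_eq hp hx, phi_nonneg_eq hp hy,
        abs_of_nonneg (by positivity)]
      have := auxA hq hx hy
      rw [hpow, inv_mul_le_iff₀ h2]
      calc (x + y) ^ (p - 1) ≤ 2 ^ (p - 1 - 1) * (x ^ (p-1) + y ^ (p-1)) := auxA hq hx hy
        _ = 2 ^ (p - 2) * (x ^ (p-1) + y ^ (p-1)) := by rw [show p-1-1 = p-2 by ring]
    · exact mixed x y hx hy.le hxy
  · have := mixed y x (by linarith) hx.le (by linarith)
    simpa [add_comm] using this

theorem stmt2 (p : ℝ) (hp : 2 ≤ p) (x y : ℝ) :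
    (2 : ℝ) ^ (2 - p) * |x + y| ^ (p - 1) ≤ |Phi p x + Phi p y| := by
  rcases le_or_gt 0 (x + y) with h | h
  · rw [abs_of_nonneg h]; exact key p hp x y h
  · have h' : 0 ≤ (-x) + (-y) := by linarith
    have := key p hp (-x) (-y) h'
    rw [phi_neg, phi_neg] at this
    rw [show -Phi p x + -Phi p y = -(Phi p x + Phi p y) by ring, abs_neg] at this
    rw [show |x + y| = (-x) + (-y) by rw [abs_of_neg h]; ring]
    exact this
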